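/- arXiv:1702.00244 — 2 statements merged into one kernel-verified Lean document; each statement's English description precedes it below -/
import Mathlib

section
/- Let ((S,T),(U,V)) be a twin cotorsion pair on an extriangulated category B, and B ∈ B with reflection sequence B --p_B--> B^+ ↠ S^U. The following are equivalent: (a) B ∈ U; (b) B^+ ∈ W (i.e. B^+ ≅ 0 in the quotient B̲^+); (c) p̲_B = 0 in B̲ = B/W. -/
namespace ExtriHearts

open CategoryTheory CategoryTheory.Limits Opposite

attribute [local instance] CategoryTheory.Limits.hasBinaryBiproducts_of_finite_biproducts

universe v u v₂ u₂

section IdealQuotient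

variable {D : Type u₂} [Category.{v₂} D] [Preadditive D]

/-- The subgroup of morphisms `X ⟶ Y` generated by those factoring through an object of `W`. -/
def wIdeal (W : Set D) (X Y : D) : AddSubgroup (X ⟶ Y) :=
  AddSubgroup.closure {f : X ⟶ Y | ∃ Z ∈ W, ∃ p : X ⟶ Z, ∃ q : Z ⟶ Y, f = p ≫ q}

/-- The hom relation on `D` identifying morphisms whose difference lies in the ideal
generated by morphisms factoring through an object of `W`.  (For an additively closed
subcategory `W` this is the usual relation "`f - g` factors through an object of `W`".) -/
def wRel (W : Set D) : HomRel D := fun {X Y} f g => f - g ∈ wIdeal W X Y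

lemma comp_left_mem_wIdeal (W : Set D) {X Y Z : D} (f : X ⟶ Y) {g : Y ⟶ Z}
    (hg : g ∈ wIdeal W Y Z) : f ≫ g ∈ wIdeal W X Z := by
  have hle : wIdeal W Y Z ≤ (wIdeal W X Z).comap (Preadditive.leftComp Z f) := by
    rw [wIdeal, AddSubgroup.closure_le]
    rintro g ⟨Z₀, hZ₀, p, q, rfl⟩
    exact AddSubgroup.subset_closure ⟨Z₀, hZ₀, f ≫ p, q, by
      simp [Preadditive.leftComp]⟩
  simpa [Preadditive.leftComp] using hle hg

lemma comp_right_mem_wIdeal (W : Set D) {X Y Z : D} {f : X ⟶ Y} (g : Y ⟶ Z)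
    (hf : f ∈ wIdeal W X Y) : f ≫ g ∈ wIdeal W X Z := by
  have hle : wIdeal W X Y ≤ (wIdeal W X Z).comap (Preadditive.rightComp X g) := by
    rw [wIdeal, AddSubgroup.closure_le]
    rintro f ⟨Z₀, hZ₀, p, q, rfl⟩
    exact AddSubgroup.subset_closure ⟨Z₀, hZ₀, p, q ≫ g, by
      simp [Preadditive.rightComp]⟩
  simpa [Preadditive.rightComp] using hle hf

instance wRel_congruence (W : Set D) : Congruence (wRel W) where
  equivalence :=
    { refl := fun f => by
        show f - f ∈ wIdeal W _ _
        simp only [sub_self]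
        exact zero_mem _
      symm := fun {f g} h => by
        have h' : f - g ∈ wIdeal W _ _ := h
        show g - f ∈ wIdeal W _ _
        simpa only [neg_sub] using neg_mem h'
      trans := fun {f g h} h₁ h₂ => by
        have h₁' : f - g ∈ wIdeal W _ _ := h₁
        have h₂' : g - h ∈ wIdeal W _ _ := h₂
        show f - h ∈ wIdeal W _ _
        simpa only [sub_add_sub_cancel] using add_mem h₁' h₂' }
  comp_left := fun {X Y Z} f {g g'} h => by
    have h' : g - g' ∈ wIdeal W _ _ := h
    show f ≫ g - f ≫ g' ∈ wIdeal W _ _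
    simpa only [← Preadditive.comp_sub] using comp_left_mem_wIdeal W f h'
  comp_right := fun {X Y Z} {f f'} g h => by
    have h' : f - f' ∈ wIdeal W _ _ := h
    show f ≫ g - f' ≫ g ∈ wIdeal W _ _
    simpa only [← Preadditive.sub_comp] using comp_right_mem_wIdeal W g h'

/-- The quotient of a preadditive category by (the ideal generated by) the morphisms factoring
through a class of objects `W`. -/
abbrev QuotCat (W : Set D) := CategoryTheory.Quotient (wRel W)

/-- The canonical quotient functor. -/
abbrev toQuot (W : Set D) : D ⥤ QuotCat W := Quotient.functor _

instance quotCatPreadditive (W : Set D) : Preadditive (QuotCat W) :=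
  Quotient.preadditive _ (fun X Y f₁ f₂ g₁ g₂ h₁ h₂ => by
    have h₁' : f₁ - f₂ ∈ wIdeal W X Y := h₁
    have h₂' : g₁ - g₂ ∈ wIdeal W X Y := h₂
    show f₁ + g₁ - (f₂ + g₂) ∈ wIdeal W X Y
    have heq : f₁ + g₁ - (f₂ + g₂) = f₁ - f₂ + (g₁ - g₂) := by abel
    rw [heq]
    exact add_mem h₁' h₂')

end IdealQuotient

section ExtCat

/-- The data of an additive `Ab`-valued bifunctor together with a realization predicate:
`realize δ x y` means that the 3-term sequence `A --x--> X --y--> C` realizes the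
`E`-extension `δ ∈ E(C,A)`, i.e. belongs to the equivalence class `s(δ)`. -/
structure PreExtStruct (B : Type u) [Category.{v} B] [Preadditive B] where
  /-- The additive bifunctor `E : Bᵒᵖ × B → Ab`. -/
  E : Bᵒᵖ ⥤ B ⥤ AddCommGrpCat.{v}

namespace PreExtStruct

variable {B : Type u} [Category.{v} B] [Preadditive B]

/-- The abelian group `E(C,A)` of `E`-extensions of `C` by `A`. -/
abbrev Ext (σ : PreExtStruct B) (C A : B) : AddCommGrpCat.{v} := (σ.E.obj (op C)).obj A

/-- `a_* δ`, the pushforward of an `E`-extension along `a : A ⟶ A'`. -/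
def push (σ : PreExtStruct B) {C A A' : B} (a : A ⟶ A') (δ : σ.Ext C A) : σ.Ext C A' :=
  (σ.E.obj (op C)).map a δ

/-- `c^* δ`, the pullback of an `E`-extension along `c : C' ⟶ C`. -/
def pull (σ : PreExtStruct B) {C' C A : B} (c : C' ⟶ C) (δ : σ.Ext C A) : σ.Ext C' A :=
  (σ.E.map c.op).app A δ

/-- The direct sum `δ ⊕ δ'` of two `E`-extensions, i.e. the element of
`E(C ⊞ C', A ⊞ A')` corresponding to `(δ, 0, 0, δ')`. -/
noncomputable def sumExt (σ : PreExtStruct B) [HasBinaryBiproducts B] {C C' A A' : B}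
    (δ : σ.Ext C A) (δ' : σ.Ext C' A') : σ.Ext (C ⊞ C') (A ⊞ A') :=
  σ.push biprod.inl (σ.pull biprod.fst δ) + σ.push biprod.inr (σ.pull biprod.snd δ')

end PreExtStruct

/-- An *extriangulated category* structure `(E, s)` on an additive category `B`, consisting of
an additive bifunctor `E : Bᵒᵖ × B → Ab` and an additive realization `s` of `E` (encoded by the
predicate `realize`), subject to the axioms (ET1), (ET2), (ET3), (ET3)ᵒᵖ, (ET4), (ET4)ᵒᵖ of
Nakaoka–Palu. -/
structure ExtStruct (B : Type u) [Category.{v} B] [Preadditive B] [HasFiniteBiproducts B]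
    extends PreExtStruct B where
  /-- (ET1) `E` is additive in the second variable. -/
  additive_fst : ∀ Cop : Bᵒᵖ, (E.obj Cop).Additive
  /-- (ET1) `E` is additive in the first variable. -/
  additive_snd : ∀ A : B, (E.flip.obj A).Additive
  /-- `realize δ x y` means the sequence `A --x--> X --y--> C` realizes `δ`, i.e. it belongs to
  the equivalence class `s(δ)`. -/
  realize : ∀ ⦃A C : B⦄, toPreExtStruct.Ext C A → ∀ ⦃X : B⦄, (A ⟶ X) → (X ⟶ C) → Prop
  /-- Every `E`-extension is realized by some sequence. -/
  realize_ex : ∀ ⦃A C : B⦄ (δ : toPreExtStruct.Ext C A),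
      ∃ (X : B) (x : A ⟶ X) (y : X ⟶ C), realize δ x y
  /-- `s(δ)` is closed under the equivalence of sequences. -/
  realize_iso : ∀ ⦃A C X X' : B⦄ (δ : toPreExtStruct.Ext C A) (x : A ⟶ X) (y : X ⟶ C)
      (b : X ≅ X'), realize δ x y → realize δ (x ≫ b.hom) (b.inv ≫ y)
  /-- Any two realizations of `δ` are equivalent sequences. -/
  realize_unique : ∀ ⦃A C X X' : B⦄ (δ : toPreExtStruct.Ext C A) (x : A ⟶ X) (y : X ⟶ C)
      (x' : A ⟶ X') (y' : X' ⟶ C), realize δ x y → realize δ x' y' →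
      ∃ b : X ≅ X', x ≫ b.hom = x' ∧ b.hom ≫ y' = y
  /-- (ET2)(∗) Any morphism of `E`-extensions is realized by a morphism of sequences. -/
  realize_map : ∀ ⦃A C A' C' X X' : B⦄ (δ : toPreExtStruct.Ext C A) (δ' : toPreExtStruct.Ext C' A')
      (x : A ⟶ X) (y : X ⟶ C) (x' : A' ⟶ X') (y' : X' ⟶ C') (a : A ⟶ A') (c : C ⟶ C'),
      realize δ x y → realize δ' x' y' →
      toPreExtStruct.push a δ = toPreExtStruct.pull c δ' →
      ∃ b : X ⟶ X', x ≫ b = a ≫ x' ∧ y ≫ c = b ≫ y'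
  /-- (ET2)(i) The split extension is realized by the split sequence. -/
  realize_zero : ∀ A C : B,
      realize (0 : toPreExtStruct.Ext C A) (biprod.inl : A ⟶ A ⊞ C) (biprod.snd : A ⊞ C ⟶ C)
  /-- (ET2)(ii) Realization is additive. -/
  realize_sum : ∀ ⦃A C A' C' X X' : B⦄ (δ : toPreExtStruct.Ext C A)
      (δ' : toPreExtStruct.Ext C' A') (x : A ⟶ X) (y : X ⟶ C) (x' : A' ⟶ X') (y' : X' ⟶ C'),
      realize δ x y → realize δ' x' y' →
      realize (toPreExtStruct.sumExt δ δ') (biprod.map x x') (biprod.map y y')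
  /-- (ET3) -/
  et3 : ∀ ⦃A C A' C' X X' : B⦄ (δ : toPreExtStruct.Ext C A) (δ' : toPreExtStruct.Ext C' A')
      (x : A ⟶ X) (y : X ⟶ C) (x' : A' ⟶ X') (y' : X' ⟶ C'),
      realize δ x y → realize δ' x' y' → ∀ (a : A ⟶ A') (b : X ⟶ X'), x ≫ b = a ≫ x' →
      ∃ c : C ⟶ C', toPreExtStruct.push a δ = toPreExtStruct.pull c δ' ∧ y ≫ c = b ≫ y'
  /-- (ET3)ᵒᵖ -/
  et3op : ∀ ⦃A C A' C' X X' : B⦄ (δ : toPreExtStruct.Ext C A) (δ' : toPreExtStruct.Ext C' A')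
      (x : A ⟶ X) (y : X ⟶ C) (x' : A' ⟶ X') (y' : X' ⟶ C'),
      realize δ x y → realize δ' x' y' → ∀ (b : X ⟶ X') (c : C ⟶ C'), y ≫ c = b ≫ y' →
      ∃ a : A ⟶ A', toPreExtStruct.push a δ = toPreExtStruct.pull c δ' ∧ x ≫ b = a ≫ x'
  /-- (ET4) -/
  et4 : ∀ ⦃A B₀ D C F : B⦄ (δ : toPreExtStruct.Ext D A) (f : A ⟶ B₀) (f' : B₀ ⟶ D)
      (δ' : toPreExtStruct.Ext F B₀) (g : B₀ ⟶ C) (g' : C ⟶ F),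
      realize δ f f' → realize δ' g g' →
      ∃ (E₀ : B) (d : D ⟶ E₀) (e : E₀ ⟶ F) (h' : C ⟶ E₀) (δ'' : toPreExtStruct.Ext E₀ A),
        g ≫ h' = f' ≫ d ∧ h' ≫ e = g' ∧
        realize δ'' (f ≫ g) h' ∧ realize (toPreExtStruct.push f' δ') d e ∧
        toPreExtStruct.pull d δ'' = δ ∧ toPreExtStruct.push f δ'' = toPreExtStruct.pull e δ'
  /-- (ET4)ᵒᵖ -/
  et4op : ∀ ⦃F C B₀ D A : B⦄ (δ' : toPreExtStruct.Ext B₀ F) (s : F ⟶ C) (t : C ⟶ B₀)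
      (δ : toPreExtStruct.Ext A D) (u : D ⟶ B₀) (v : B₀ ⟶ A),
      realize δ' s t → realize δ u v →
      ∃ (E₀ : B) (e : F ⟶ E₀) (d : E₀ ⟶ D) (m : E₀ ⟶ C) (δ'' : toPreExtStruct.Ext A E₀),
        m ≫ t = d ≫ u ∧ e ≫ m = s ∧
        realize δ'' m (t ≫ v) ∧ realize (toPreExtStruct.pull u δ') e d ∧
        toPreExtStruct.push d δ'' = δ ∧
        toPreExtStruct.pull v δ'' = toPreExtStruct.push e δ'

namespace ExtStruct

variable {B : Type u} [Category.{v} B] [Preadditive B] [HasFiniteBiproducts B] (σ : ExtStruct B)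

/-- A sequence `A --x--> X --y--> C` is a conflation if it realizes some `E`-extension. -/
def Conflation {A X C : B} (x : A ⟶ X) (y : X ⟶ C) : Prop :=
  ∃ δ : σ.Ext C A, σ.realize δ x y

/-- `Cone(D₁, D₂)`: objects `X` admitting a conflation `D₁ ↣ D₂ ↠ X`. -/
def Cone (D₁ D₂ : Set B) : Set B :=
  {X | ∃ (A Y : B) (f : A ⟶ Y) (g : Y ⟶ X), A ∈ D₁ ∧ Y ∈ D₂ ∧ σ.Conflation f g}

/-- `CoCone(D₁, D₂)`: objects `X` admitting a conflation `X ↣ D₁ ↠ D₂`. -/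
def CoCone (D₁ D₂ : Set B) : Set B :=
  {X | ∃ (Y C : B) (f : X ⟶ Y) (g : Y ⟶ C), Y ∈ D₁ ∧ C ∈ D₂ ∧ σ.Conflation f g}

/-- `D₁ ∗ D₂`: objects `X` admitting a conflation `D₁ ↣ X ↠ D₂`. -/
def star (D₁ D₂ : Set B) : Set B :=
  {X | ∃ (A C : B) (f : A ⟶ X) (g : X ⟶ C), A ∈ D₁ ∧ C ∈ D₂ ∧ σ.Conflation f g}

/-- `add(D₁ ∗ D₂)`: direct summands of objects of `D₁ ∗ D₂`. -/
def addStar (D₁ D₂ : Set B) : Set B :=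
  {X | ∃ Y ∈ σ.star D₁ D₂, ∃ (s : X ⟶ Y) (r : Y ⟶ X), s ≫ r = 𝟙 X}

/-- An object `P` is projective if `E(P, −) = 0`. -/
def IsProj (P : B) : Prop := ∀ (A : B) (δ : σ.Ext P A), δ = 0

/-- An object `I` is injective if `E(−, I) = 0`. -/
def IsInj (I : B) : Prop := ∀ (C : B) (δ : σ.Ext C I), δ = 0

/-- The class of projective objects. -/
def projs : Set B := {P | σ.IsProj P}

/-- `B` has enough projectives: every object admits a deflation from a projective. -/
def EnoughProj : Prop :=
  ∀ X : B, ∃ (P K : B) (i : K ⟶ P) (p : P ⟶ X), σ.IsProj P ∧ σ.Conflation i p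

/-- `B` has enough injectives: every object admits an inflation into an injective. -/
def EnoughInj : Prop :=
  ∀ X : B, ∃ (I C : B) (i : X ⟶ I) (p : I ⟶ C), σ.IsInj I ∧ σ.Conflation i p

end ExtStruct

/-- A full additive subcategory (given as a class of objects), closed under isomorphisms and
direct summands. -/
structure AddClosed {B : Type u} [Category.{v} B] [Preadditive B] [HasFiniteBiproducts B]
    (U : Set B) : Prop where
  zero_mem : ∀ Z : B, IsZero Z → Z ∈ U
  biprod_mem : ∀ X Y : B, X ∈ U → Y ∈ U → (X ⊞ Y) ∈ U
  summand_mem : ∀ X Y : B, Y ∈ U → ∀ (s : X ⟶ Y) (r : Y ⟶ X), s ≫ r = 𝟙 X → X ∈ U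

namespace ExtStruct

variable {B : Type u} [Category.{v} B] [Preadditive B] [HasFiniteBiproducts B] (σ : ExtStruct B)

/-- A (complete) cotorsion pair `(U, V)` on an extriangulated category. -/
structure IsCotorsionPair (U V : Set B) : Prop where
  addU : AddClosed U
  addV : AddClosed V
  ext_vanish : ∀ ⦃X : B⦄, X ∈ U → ∀ ⦃Y : B⦄, Y ∈ V → ∀ δ : σ.Ext X Y, δ = 0
  resolve : ∀ X : B, ∃ (V₀ U₀ : B) (f : V₀ ⟶ U₀) (g : U₀ ⟶ X),
      V₀ ∈ V ∧ U₀ ∈ U ∧ σ.Conflation f g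
  coresolve : ∀ X : B, ∃ (V₀ U₀ : B) (f : X ⟶ V₀) (g : V₀ ⟶ U₀),
      V₀ ∈ V ∧ U₀ ∈ U ∧ σ.Conflation f g

/-- A twin cotorsion pair `((S,T), (U,V))`. -/
structure IsTwinCotorsionPair (S T U V : Set B) : Prop where
  fst : σ.IsCotorsionPair S T
  snd : σ.IsCotorsionPair U V
  ext_SV : ∀ ⦃X : B⦄, X ∈ S → ∀ ⦃Y : B⦄, Y ∈ V → ∀ δ : σ.Ext X Y, δ = 0

section Twin

variable (S T U V : Set B)

/-- `B⁺ = Cone(V, W)` for the core `W = T ∩ U` of a twin cotorsion pair. -/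
def tPos : Set B := σ.Cone V (T ∩ U)

/-- `B⁻ = CoCone(W, S)` for the core `W = T ∩ U` of a twin cotorsion pair. -/
def tNeg : Set B := σ.CoCone (T ∩ U) S

/-- The class of objects of the heart `H = B⁺ ∩ B⁻` of a twin cotorsion pair. -/
def tHeartSet : Set B := σ.tPos T U V ∩ σ.tNeg S T U

/-- The heart `H/W` of a twin cotorsion pair, as a full subcategory of the quotient
category `B/W`. -/
abbrev THeart := ObjectProperty.FullSubcategory (fun X : QuotCat (T ∩ U : Set B) => X.as ∈ σ.tHeartSet S T U V)


/-- A *reflection sequence* for `B₀`: a conflation `B₀ ↣ Z ↠ S₀` with `Z ∈ B⁺`, `S₀ ∈ S`,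
such that `z^* : E(Z, V₀) → E(B₀, V₀)` is surjective for every `V₀ ∈ V`. -/
def IsReflectionSeq {B₀ Z S₀ : B} (z : B₀ ⟶ Z) (w : Z ⟶ S₀) : Prop :=
  Z ∈ σ.tPos T U V ∧ S₀ ∈ S ∧ σ.Conflation z w ∧
    ∀ ⦃V₀ : B⦄, V₀ ∈ V → Function.Surjective (fun δ : σ.Ext Z V₀ => σ.pull z δ)

/-- A *coreflection sequence* for `B₀`: a conflation `V₀ ↣ X ↠ B₀` with `X ∈ B⁻`, `V₀ ∈ V`,
such that `x_* : E(S₀, X) → E(S₀, B₀)` is surjective for every `S₀ ∈ S`. -/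
def IsCoreflectionSeq {V₀ X B₀ : B} (v : V₀ ⟶ X) (x : X ⟶ B₀) : Prop :=
  X ∈ σ.tNeg S T U ∧ V₀ ∈ V ∧ σ.Conflation v x ∧
    ∀ ⦃S₀ : B⦄, S₀ ∈ S → Function.Surjective (fun δ : σ.Ext S₀ X => σ.push x δ)

end Twin

section Single

variable (U V : Set B)

/-- `B⁺` for a single cotorsion pair `(U,V)`, with core `W = U ∩ V`. -/
def sPos : Set B := σ.Cone V (U ∩ V)

/-- `B⁻` for a single cotorsion pair `(U,V)`, with core `W = U ∩ V`. -/
def sNeg : Set B := σ.CoCone (U ∩ V) U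

/-- The class of objects of the heart of a single cotorsion pair. -/
def sHeartSet : Set B := σ.sPos U V ∩ σ.sNeg U V

/-- The heart `H/W` of a cotorsion pair `(U,V)`, a full subcategory of `B/W`, `W = U ∩ V`. -/
abbrev SHeart := ObjectProperty.FullSubcategory (fun X : QuotCat (U ∩ V : Set B) => X.as ∈ σ.sHeartSet U V)

/-- The inclusion of the heart into the quotient category `B/W`. -/
abbrev sHeartIncl : σ.SHeart U V ⥤ QuotCat (U ∩ V : Set B) := ObjectProperty.ι _

/-- The kernel `K = add(U ∗ V)` of a cotorsion pair. -/
def kernelSet : Set B := σ.addStar U V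

/-- The coheart `C = ⊥₁K` of a cotorsion pair. -/
def coheart : Set B := {X | ∀ ⦃K : B⦄, K ∈ σ.kernelSet U V → ∀ δ : σ.Ext X K, δ = 0}


/-- An object of the heart determined by an object of `B` lying in `B⁺ ∩ B⁻`. -/
def sHeartObj {X : B} (hX : X ∈ σ.sHeartSet U V) : σ.SHeart U V :=
  ⟨(toQuot (U ∩ V : Set B)).obj X, hX⟩

/-- The image in the heart of a morphism of `B` between objects of `B⁺ ∩ B⁻`. -/
def sHeartHom {X Y : B} (hX : X ∈ σ.sHeartSet U V) (hY : Y ∈ σ.sHeartSet U V) (f : X ⟶ Y) :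
    σ.sHeartObj U V hX ⟶ σ.sHeartObj U V hY :=
  ObjectProperty.homMk ((toQuot (U ∩ V : Set B)).map f)

end Single

end ExtStruct

end ExtCat

section More

variable {B : Type u} [Category.{v} B] [Preadditive B] [HasFiniteBiproducts B]

namespace ExtStruct

variable (σ : ExtStruct B)

/-- `Ω D₀ = CoCone(P, D₀)`, the syzygy class of a class of objects `D₀`. -/
def omegaSet (D₀ : Set B) : Set B := σ.CoCone σ.projs D₀

/-- A choice of iterated syzygies of `X`: `Z 0 = X` and for each `i` there is a conflation
`Z (i+1) ↣ P ↠ Z i` with `P` projective. -/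
def SyzygyChain (X : B) (Z : ℕ → B) : Prop :=
  Z 0 = X ∧ ∀ i : ℕ, ∃ (P : B) (f : Z (i + 1) ⟶ P) (g : P ⟶ Z i),
    σ.IsProj P ∧ σ.Conflation f g

/-- A choice of iterated cosyzygies of `Y`: `Z 0 = Y` and for each `i` there is a conflation
`Z i ↣ I ↠ Z (i+1)` with `I` injective. -/
def CosyzygyChain (Y : B) (Z : ℕ → B) : Prop :=
  Z 0 = Y ∧ ∀ i : ℕ, ∃ (I : B) (f : Z i ⟶ I) (g : I ⟶ Z (i + 1)),
    σ.IsInj I ∧ σ.Conflation f g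

/-- Vanishing of the higher extension group `E^{i+1}(X, Y) = E(X, Σ^i Y)`, expressed via
cosyzygy chains.  (`hExtVanish σ X Y 0` is the vanishing of `E(X,Y)` itself.) -/
def hExtVanish (X Y : B) (i : ℕ) : Prop :=
  ∀ Z : ℕ → B, σ.CosyzygyChain Y Z → ∀ δ : σ.Ext X (Z i), δ = 0

/-- `Σ^j D₀`: the class of `j`-th cosyzygies of objects of `D₀`. -/
def sigmaSet (j : ℕ) (D₀ : Set B) : Set B :=
  {X | ∃ Y ∈ D₀, ∃ Z : ℕ → B, σ.CosyzygyChain Y Z ∧ Z j = X}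

/-- An `n`-cluster tilting subcategory of an extriangulated category:
it is functorially finite, and `X ∈ M` iff `E^i(X, M) = 0` for `1 ≤ i ≤ n - 1`,
iff `E^i(M, X) = 0` for `1 ≤ i ≤ n - 1`. -/
structure IsNClusterTilting (n : ℕ) (M : Set B) : Prop where
  contravariantly_finite : ∀ X : B, ∃ M₀ ∈ M, ∃ f : M₀ ⟶ X,
      ∀ M₁ ∈ M, ∀ g : M₁ ⟶ X, ∃ h : M₁ ⟶ M₀, h ≫ f = g
  covariantly_finite : ∀ X : B, ∃ M₀ ∈ M, ∃ f : X ⟶ M₀,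
      ∀ M₁ ∈ M, ∀ g : X ⟶ M₁, ∃ h : M₀ ⟶ M₁, f ≫ h = g
  mem_iff_vanish_left : ∀ X : B,
      X ∈ M ↔ ∀ i : ℕ, i ≤ n - 2 → ∀ Y ∈ M, σ.hExtVanish X Y i
  mem_iff_vanish_right : ∀ X : B,
      X ∈ M ↔ ∀ i : ℕ, i ≤ n - 2 → ∀ Y ∈ M, σ.hExtVanish Y X i

/-- `mlev σ M k` is the subcategory `M_{k+1}` of the paper: `M_1 = M` and
`M_{ℓ} = Cone(M_{ℓ-1}, M)`. -/
def mlev (M : Set B) : ℕ → Set B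
  | 0 => M
  | (k + 1) => σ.Cone (mlev M k) M

end ExtStruct

section Reflectors

variable (W P N : Set B)

/-- The data of a reflection functor `σ⁺` onto the objects of `B⁺` (given by the class `P`),
i.e. a left adjoint of the inclusion of the full subcategory of `B/W` on `P` in the bijection
formulation: composing with the unit `B → σ⁺B` gives bijections
`(σ⁺X ⟶ Y) ≃ (X ⟶ Y)` for all `Y` lying in `P`. -/
structure ReflectorData where
  σp : QuotCat W ⥤ QuotCat W
  mem : ∀ X : QuotCat W, (σp.obj X).as ∈ P
  unit : 𝟭 (QuotCat W) ⟶ σp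
  bij : ∀ (X Y : QuotCat W), Y.as ∈ P →
      Function.Bijective (fun g : (σp.obj X ⟶ Y) => unit.app X ≫ g)

/-- The data of a coreflection functor `σ⁻` onto the objects of `B⁻` (given by the class `N`). -/
structure CoreflectorData where
  σm : QuotCat W ⥤ QuotCat W
  mem : ∀ X : QuotCat W, (σm.obj X).as ∈ N
  counit : σm ⟶ 𝟭 (QuotCat W)
  bij : ∀ (X Y : QuotCat W), X.as ∈ N →
      Function.Bijective (fun g : (X ⟶ σm.obj Y) => g ≫ counit.app Y)

end Reflectors

namespace ExtStruct

variable (σ : ExtStruct B)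

/-- The data of the cohomological functor `H = σ⁻ ∘ σ⁺ ∘ π : B → H` associated to a cotorsion
pair `(U, V)`: reflection and coreflection functors together with a functor `H` to the heart
which is isomorphic to `σ⁻ ∘ σ⁺ ∘ π` after composition with the inclusion of the heart. -/
structure HeartFunctorData (U V : Set B) where
  refl : ReflectorData (B := B) (U ∩ V) (σ.sPos U V)
  corefl : CoreflectorData (B := B) (U ∩ V) (σ.sNeg U V)
  H : B ⥤ σ.SHeart U V
  iso : (H ⋙ σ.sHeartIncl U V) ≅ (toQuot (U ∩ V : Set B) ⋙ refl.σp ⋙ corefl.σm)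

end ExtStruct

section Mod

variable (D : Type u₂) [Category.{v₂} D] [Preadditive D]

/-- A coherent (finitely presented) functor `Dᵒᵖ ⥤ Ab`: one admitting an exact presentation
`Hom(−,X) → Hom(−,Y) → F → 0`. -/
def IsCoherent (F : Dᵒᵖ ⥤ AddCommGrpCat.{v₂}) : Prop :=
  ∃ (X Y : D) (f : X ⟶ Y) (η : preadditiveYoneda.obj Y ⟶ F),
    (∀ A : D, Function.Surjective (η.app (op A))) ∧
    (∀ (A : D) (g : A ⟶ Y), η.app (op A) g = 0 ↔ ∃ h : A ⟶ X, h ≫ f = g)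

/-- `mod D`: the category of coherent functors `Dᵒᵖ ⥤ Ab`. -/
abbrev ModCat := ObjectProperty.FullSubcategory (fun F : Dᵒᵖ ⥤ AddCommGrpCat.{v₂} => IsCoherent D F)

end Mod

/-- The additive quotient `C/P` of the full subcategory of `B` on a class `C₀` of objects by
(the ideal of) morphisms factoring through objects satisfying `P₀`. -/
abbrev StableCat (C₀ P₀ : Set B) :=
  QuotCat (D := ObjectProperty.FullSubcategory (fun X : B => X ∈ C₀)) {Z | Z.obj ∈ P₀}

end More

section Aux

variable {B : Type u} [Category.{v} B] [Preadditive B] [HasFiniteBiproducts B]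

namespace ExtStruct

variable (σ : ExtStruct B)

lemma pull_zero' {C' C A : B} (c : C' ⟶ C) :
    σ.pull c (0 : σ.Ext C A) = 0 :=
  map_zero _

lemma push_id' {C A : B} (δ : σ.Ext C A) : σ.push (𝟙 A) δ = δ := by
  simp [PreExtStruct.push]

lemma push_zero' {C A A' : B} (a : A ⟶ A') :
    σ.push a (0 : σ.Ext C A) = 0 :=
  map_zero _

lemma push_comp' {C A A' A'' : B} (a : A ⟶ A') (b : A' ⟶ A'') (δ : σ.Ext C A) :
    σ.push (a ≫ b) δ = σ.push b (σ.push a δ) := by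
  simp [PreExtStruct.push]

lemma pull_comp' {C'' C' C A : B} (a : C'' ⟶ C') (b : C' ⟶ C) (δ : σ.Ext C A) :
    σ.pull (a ≫ b) δ = σ.pull a (σ.pull b δ) := by
  have : (a ≫ b).op = b.op ≫ a.op := rfl
  simp only [PreExtStruct.pull, this, Functor.map_comp]
  rfl

lemma pull_push' {C' C A A' : B} (c : C' ⟶ C) (a : A ⟶ A') (δ : σ.Ext C A) :
    σ.pull c (σ.push a δ) = σ.push a (σ.pull c δ) := by
  have h := (σ.E.map c.op).naturality a
  exact ConcreteCategory.congr_hom h δ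

/-- From a realization of the zero extension, the third object is a direct summand
of the middle object. -/
lemma section_of_realize_zero {A C X : B} {x : A ⟶ X} {y : X ⟶ C}
    (h : σ.realize (0 : σ.Ext C A) x y) : ∃ s : C ⟶ X, s ≫ y = 𝟙 C := by
  obtain ⟨b, _, hb2⟩ :=
    σ.realize_unique (0 : σ.Ext C A) biprod.inl biprod.snd x y (σ.realize_zero A C) h
  exact ⟨biprod.inr ≫ b.hom, by rw [Category.assoc, hb2]; simp⟩

/-- From a realization of the zero extension, the first object is a direct summand
of the middle object. -/
lemma retraction_of_realize_zero {A C X : B} {x : A ⟶ X} {y : X ⟶ C}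
    (h : σ.realize (0 : σ.Ext C A) x y) : ∃ r : X ⟶ A, x ≫ r = 𝟙 A := by
  obtain ⟨b, hb1, _⟩ :=
    σ.realize_unique (0 : σ.Ext C A) biprod.inl biprod.snd x y (σ.realize_zero A C) h
  refine ⟨b.inv ≫ biprod.fst, ?_⟩
  rw [← hb1]
  simp

/-- An object with vanishing extensions against all of `V` belongs to `U`. -/
lemma mem_left_of_ext_vanish {U V : Set B} (cp : σ.IsCotorsionPair U V) (X : B)
    (h : ∀ V₀ ∈ V, ∀ δ : σ.Ext X V₀, δ = 0) : X ∈ U := by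
  obtain ⟨V₀, U₀, f, g, hV, hU, δ, hreal⟩ := cp.resolve X
  rw [h V₀ hV δ] at hreal
  obtain ⟨s, hs⟩ := σ.section_of_realize_zero hreal
  exact cp.addU.summand_mem X U₀ hU s g hs

/-- Exactness of `E(−, A₀)` in the middle: if `θ ∈ E(X, A₀)` pulls back to zero along the
inflation of a conflation `A ↣ X ↠ C`, then it is pulled back from `E(C, A₀)`. -/
lemma exact_middle {A X C A₀ : B} {x : A ⟶ X} {y : X ⟶ C} (hc : σ.Conflation x y)
    (θ : σ.Ext X A₀) (h0 : σ.pull x θ = 0) : ∃ ε : σ.Ext C A₀, θ = σ.pull y ε := by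
  obtain ⟨δ, hδ⟩ := hc
  obtain ⟨M, m, e, hθ⟩ := σ.realize_ex θ
  obtain ⟨E₀, e', d, m', δ'', _, _, _, h4, _, h6⟩ := σ.et4op θ m e δ x y hθ hδ
  rw [h0] at h4
  obtain ⟨r, hr⟩ := σ.retraction_of_realize_zero h4
  refine ⟨σ.push r δ'', ?_⟩
  rw [pull_push', h6, ← push_comp', hr, push_id']

/-- If an extension realized by `V₁ ↣ W₁ ↠ Bp` pulls back to zero along `pB : B₀ ⟶ Bp`,
then `pB` lifts through `W₁`. -/
lemma lift_of_pull_zero {V₁ W₁ Bp B₀ : B} {v : V₁ ⟶ W₁} {w : W₁ ⟶ Bp} {δ₁ : σ.Ext Bp V₁}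
    (h : σ.realize δ₁ v w) (pB : B₀ ⟶ Bp) (h0 : σ.pull pB δ₁ = 0) :
    ∃ ℓ : B₀ ⟶ W₁, ℓ ≫ w = pB := by
  obtain ⟨b, _, hb2⟩ := σ.realize_map (0 : σ.Ext B₀ V₁) δ₁ biprod.inl biprod.snd v w
    (𝟙 V₁) pB (σ.realize_zero V₁ B₀) h (by rw [σ.push_zero', h0])
  refine ⟨biprod.inr ≫ b, ?_⟩
  rw [Category.assoc, ← hb2, ← Category.assoc]
  simp

end ExtStruct

/-- For an additively closed class `W`, the ideal `wIdeal W` is exactly the set of morphisms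
factoring through an object of `W`. -/
lemma mem_wIdeal_iff {W : Set B} (hW : AddClosed W) {X Y : B} (f : X ⟶ Y) :
    f ∈ wIdeal W X Y ↔ ∃ Z ∈ W, ∃ p : X ⟶ Z, ∃ q : Z ⟶ Y, f = p ≫ q := by
  constructor
  · intro hf
    induction hf using AddSubgroup.closure_induction with
    | mem g hg => exact hg
    | zero =>
      obtain ⟨Z₀, hZ₀⟩ := (inferInstance : HasZeroObject B).zero
      exact ⟨Z₀, hW.zero_mem Z₀ hZ₀, 0, 0, by simp⟩
    | add g₁ g₂ hg₁ hg₂ ih₁ ih₂ =>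
      obtain ⟨Z₁, hZ₁, p₁, q₁, rfl⟩ := ih₁
      obtain ⟨Z₂, hZ₂, p₂, q₂, rfl⟩ := ih₂
      exact ⟨Z₁ ⊞ Z₂, hW.biprod_mem Z₁ Z₂ hZ₁ hZ₂, biprod.lift p₁ p₂, biprod.desc q₁ q₂,
        (biprod.lift_desc).symm⟩
    | neg g hg ih =>
      obtain ⟨Z, hZ, p, q, rfl⟩ := ih
      exact ⟨Z, hZ, p, -q, by simp⟩
  · intro hf
    exact AddSubgroup.subset_closure hf

lemma toQuot_map_eq_zero_iff {W : Set B} (hW : AddClosed W) {X Y : B} (f : X ⟶ Y) :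
    (toQuot W).map f = 0 ↔ ∃ Z ∈ W, ∃ p : X ⟶ Z, ∃ q : Z ⟶ Y, f = p ≫ q := by
  have hz : (0 : (toQuot W).obj X ⟶ (toQuot W).obj Y) = (toQuot W).map (0 : X ⟶ Y) := rfl
  rw [hz, Quotient.functor_map_eq_iff]
  show f - 0 ∈ wIdeal W X Y ↔ _
  rw [sub_zero]
  exact mem_wIdeal_iff hW f

end Aux

/-- Lemma 2.17 / `Ceq`. For a reflection sequence
`B₀ --p_B--> B⁺ ↠ S^U` of a twin cotorsion pair, the following are equivalent:
(a) `B₀ ∈ U`; (b) `B⁺ ∈ W = T ∩ U` (i.e. `B⁺ ≅ 0` in `B̄⁺`); (c) `p̄_B = 0` in `B̄ = B/W`. -/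
theorem statement_4 {B : Type u} [Category.{v} B] [Preadditive B] [HasFiniteBiproducts B]
    (σ : ExtStruct B) {S T U V : Set B} (twin : σ.IsTwinCotorsionPair S T U V)
    {B₀ Bp SU : B} (pB : B₀ ⟶ Bp) (q : Bp ⟶ SU)
    (hrefl : σ.IsReflectionSeq S T U V pB q) :
    (B₀ ∈ U ↔ Bp ∈ T ∩ U) ∧
    (B₀ ∈ U ↔ (toQuot (T ∩ U : Set B)).map pB = 0) := by
  classical
  obtain ⟨hBpPos, hSU, hconf, hsurj⟩ := hrefl
  have hWclosed : AddClosed (T ∩ U : Set B) :=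
    { zero_mem := fun Z h => ⟨twin.fst.addV.zero_mem Z h, twin.snd.addU.zero_mem Z h⟩
      biprod_mem := fun X Y hX hY =>
        ⟨twin.fst.addV.biprod_mem X Y hX.1 hY.1, twin.snd.addU.biprod_mem X Y hX.2 hY.2⟩
      summand_mem := fun X Y hY s r hsr =>
        ⟨twin.fst.addV.summand_mem X Y hY.1 s r hsr,
         twin.snd.addU.summand_mem X Y hY.2 s r hsr⟩ }
  have hca : (∃ Z ∈ (T ∩ U : Set B), ∃ p : B₀ ⟶ Z, ∃ q' : Z ⟶ Bp, pB = p ≫ q') → B₀ ∈ U := by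
    rintro ⟨W₀, hW₀, p, q', hfac⟩
    refine σ.mem_left_of_ext_vanish twin.snd B₀ (fun V₀ hV₀ δ => ?_)
    obtain ⟨δ', hδ'⟩ := hsurj hV₀ δ
    rw [← hδ']
    show σ.pull pB δ' = 0
    rw [hfac, σ.pull_comp', twin.snd.ext_vanish hW₀.2 hV₀ (σ.pull q' δ'), σ.pull_zero']
  have haU : B₀ ∈ U → Bp ∈ T ∩ U := by
    intro hB₀
    have hBpU : Bp ∈ U := by
      refine σ.mem_left_of_ext_vanish twin.snd Bp (fun V₀ hV₀ δ => ?_)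
      have h0 : σ.pull pB δ = 0 := twin.snd.ext_vanish hB₀ hV₀ _
      obtain ⟨ε, hε⟩ := σ.exact_middle hconf δ h0
      rw [hε, twin.ext_SV hSU hV₀ ε, σ.pull_zero']
    obtain ⟨V₁, W₁, v, w, hV₁, hW₁, δ₁, hδ₁⟩ := hBpPos
    have hz : δ₁ = 0 := twin.snd.ext_vanish hBpU hV₁ δ₁
    rw [hz] at hδ₁
    obtain ⟨s, hs⟩ := σ.section_of_realize_zero hδ₁
    exact ⟨twin.fst.addV.summand_mem Bp W₁ hW₁.1 s w hs,
      twin.snd.addU.summand_mem Bp W₁ hW₁.2 s w hs⟩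
  have hbU : Bp ∈ T ∩ U → B₀ ∈ U := fun hBp => hca ⟨Bp, hBp, pB, 𝟙 Bp, by simp⟩
  have hac : B₀ ∈ U →
      ∃ Z ∈ (T ∩ U : Set B), ∃ p : B₀ ⟶ Z, ∃ q' : Z ⟶ Bp, pB = p ≫ q' := by
    intro hB₀
    obtain ⟨V₁, W₁, v, w, hV₁, hW₁, δ₁, hδ₁⟩ := hBpPos
    have h0 : σ.pull pB δ₁ = 0 := twin.snd.ext_vanish hB₀ hV₁ _
    obtain ⟨ℓ, hℓ⟩ := σ.lift_of_pull_zero hδ₁ pB h0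
    exact ⟨W₁, hW₁, ℓ, w, hℓ.symm⟩
  refine ⟨⟨haU, hbU⟩, ?_⟩
  rw [toQuot_map_eq_zero_iff hWclosed]
  exact ⟨hac, hca⟩


end ExtriHearts
end

section
/- Let B be an extriangulated category with enough projectives, with P ⊆ B the subcategory of projective objects. Let U, V ⊆ B be full additive subcategories closed under direct summands and isomorphisms, and suppose U satisfies: (i) P ⊆ U, and (ii) U is extension-closed in B. Then (U,V) is a cotorsion pair on B if and only if E(U,V) = 0 and B = CoCone(V,U), i.e. every object B ∈ B admits a conflation B ↣ V' ↠ U' with V' ∈ V, U' ∈ U. -/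
namespace ExtriHearts

open CategoryTheory CategoryTheory.Limits Opposite

attribute [local instance] CategoryTheory.Limits.hasBinaryBiproducts_of_finite_biproducts

universe v u v₂ u₂

section AuxProof

variable {B : Type u} [Category.{v} B] [Preadditive B] [HasFiniteBiproducts B] (σ : ExtStruct B)

lemma aux_push_id {C A : B} (δ : σ.Ext C A) : σ.push (𝟙 A) δ = δ := by
  simp [PreExtStruct.push]

lemma aux_pull_id {C A : B} (δ : σ.Ext C A) : σ.pull (𝟙 C) δ = δ := by
  simp [PreExtStruct.pull]

lemma aux_pull_comp {C'' C' C A : B} (f : C'' ⟶ C') (g : C' ⟶ C) (δ : σ.Ext C A) :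
    σ.pull (f ≫ g) δ = σ.pull f (σ.pull g δ) := by
  simp [PreExtStruct.pull]

lemma aux_pull_sub {C' C A : B} (f g : C' ⟶ C) (δ : σ.Ext C A) :
    σ.pull (f - g) δ = σ.pull f δ - σ.pull g δ := by
  have hadd : (σ.E.flip.obj A).Additive := σ.additive_snd A
  have h1 : ∀ (c : C' ⟶ C), σ.pull c δ = ((σ.E.flip.obj A).map c.op) δ := fun _ => rfl
  rw [h1, h1, h1]
  have hop : (f - g).op = f.op - g.op := rfl
  rw [hop, Functor.map_sub]
  rfl

/-- From a realization of `0` we get a section of the deflation. -/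
lemma aux_split {A X C : B} {x : A ⟶ X} {y : X ⟶ C}
    (h : σ.realize (0 : σ.Ext C A) x y) : ∃ s : C ⟶ X, s ≫ y = 𝟙 C := by
  obtain ⟨b, hb1, hb2⟩ := σ.realize_unique 0 x y biprod.inl biprod.snd h (σ.realize_zero A C)
  refine ⟨biprod.inr ≫ b.inv, ?_⟩
  rw [Category.assoc, ← hb2, Iso.inv_hom_id_assoc, biprod.inr_snd]

/-- Exactness: a map into the middle killing the deflation lifts to the kernel. -/
lemma aux_lift {A X C T : B} {δ : σ.Ext C A} {x : A ⟶ X} {y : X ⟶ C}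
    (h : σ.realize δ x y) (t : T ⟶ X) (ht : t ≫ y = 0) : ∃ u : T ⟶ A, u ≫ x = t := by
  obtain ⟨a, _, ha2⟩ := σ.et3op (0 : σ.Ext X T) δ biprod.inl biprod.snd x y
    (σ.realize_zero T X) h (biprod.desc t (𝟙 X)) y
    (by apply biprod.hom_ext' <;> simp [ht])
  exact ⟨a, by simpa using ha2.symm⟩

/-- A map into the base with vanishing pullback factors through the deflation. -/
lemma aux_factor {A X C T : B} {δ : σ.Ext C A} {x : A ⟶ X} {y : X ⟶ C}
    (h : σ.realize δ x y) (t : T ⟶ C) (ht : σ.pull t δ = 0) : ∃ s : T ⟶ X, s ≫ y = t := by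
  obtain ⟨X₁, x₁, y₁, h₁⟩ := σ.realize_ex (σ.pull t δ)
  obtain ⟨b, _, hb2⟩ := σ.realize_map (σ.pull t δ) δ x₁ y₁ x y (𝟙 A) t h₁ h
    (by rw [aux_push_id])
  rw [ht] at h₁
  obtain ⟨s', hs'⟩ := aux_split σ h₁
  exact ⟨s' ≫ b, by rw [Category.assoc, ← hb2, ← Category.assoc, hs', Category.id_comp]⟩

/-- An endomorphism of the middle term compatible with a conflation is invertible. -/
lemma aux_iso_X {A X C : B} {δ : σ.Ext C A} {x : A ⟶ X} {y : X ⟶ C}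
    (h : σ.realize δ x y) {e : X ⟶ X} (hx : x ≫ e = x) (hy : e ≫ y = y) :
    ∃ ei : X ⟶ X, e ≫ ei = 𝟙 X ∧ ei ≫ e = 𝟙 X := by
  obtain ⟨u, hu⟩ := aux_lift σ h (𝟙 X - e) (by simp [Preadditive.sub_comp, hy])
  have hx0 : x ≫ (u ≫ x) = 0 := by
    rw [hu]; simp [Preadditive.comp_sub, hx]
  have hnil : (u ≫ x) ≫ (u ≫ x) = 0 := by
    rw [Category.assoc, hx0, Limits.comp_zero]
  have he : e = 𝟙 X - u ≫ x := by rw [hu]; abel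
  refine ⟨𝟙 X + u ≫ x, ?_, ?_⟩ <;>
    · rw [he]
      simp only [Preadditive.sub_comp, Preadditive.comp_add, Preadditive.add_comp,
        Preadditive.comp_sub, Category.id_comp, Category.comp_id, hnil]
      abel
  
/-- An endomorphism of the base compatible with a conflation and fixing the extension
class is invertible. -/
lemma aux_iso_C {A X C : B} {δ : σ.Ext C A} {x : A ⟶ X} {y : X ⟶ C}
    (h : σ.realize δ x y) {g : C ⟶ C} (hg : σ.pull g δ = δ) (hyg : y ≫ g = y) :
    ∃ gi : C ⟶ C, g ≫ gi = 𝟙 C ∧ gi ≫ g = 𝟙 C := by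
  obtain ⟨s, hs⟩ := aux_factor σ h (𝟙 C - g)
    (by rw [aux_pull_sub, aux_pull_id, hg, sub_self])
  have hy0 : y ≫ (s ≫ y) = 0 := by
    rw [hs]; simp [Preadditive.comp_sub, hyg]
  have hnil : (s ≫ y) ≫ (s ≫ y) = 0 := by
    rw [Category.assoc, hy0, Limits.comp_zero]
  have hgeq : g = 𝟙 C - s ≫ y := by rw [hs]; abel
  refine ⟨𝟙 C + s ≫ y, ?_, ?_⟩ <;>
    · rw [hgeq]
      simp only [Preadditive.sub_comp, Preadditive.comp_add, Preadditive.add_comp,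
        Preadditive.comp_sub, Category.id_comp, Category.comp_id, hnil]
      abel

/-- Cones over a fixed inflation are unique up to isomorphism. -/
lemma aux_cone_unique {A W E₀ E₁ : B} {δ : σ.Ext E₀ A} {ε : σ.Ext E₁ A}
    {x : A ⟶ W} {h₁ : W ⟶ E₀} {h₂ : W ⟶ E₁}
    (hδ : σ.realize δ x h₁) (hε : σ.realize ε x h₂) :
    ∃ c : E₀ ≅ E₁, h₁ ≫ c.hom = h₂ := by
  obtain ⟨c, hc1, hc2⟩ := σ.et3 δ ε x h₁ x h₂ hδ hε (𝟙 A) (𝟙 W) (by simp)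
  obtain ⟨c', hc1', hc2'⟩ := σ.et3 ε δ x h₂ x h₁ hε hδ (𝟙 A) (𝟙 W) (by simp)
  rw [aux_push_id] at hc1 hc1'
  rw [Category.id_comp] at hc2 hc2'
  have hg : σ.pull (c ≫ c') δ = δ := by
    rw [aux_pull_comp, ← hc1', ← hc1]
  have hg' : σ.pull (c' ≫ c) ε = ε := by
    rw [aux_pull_comp, ← hc1, ← hc1']
  have hgc : h₁ ≫ (c ≫ c') = h₁ := by rw [← Category.assoc, hc2, hc2']
  have hgc' : h₂ ≫ (c' ≫ c) = h₂ := by rw [← Category.assoc, hc2', hc2]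
  obtain ⟨gi, hgi1, hgi2⟩ := aux_iso_C σ hδ hg hgc
  obtain ⟨gi', hgi1', hgi2'⟩ := aux_iso_C σ hε hg' hgc'
  have hright : c ≫ (c' ≫ gi) = 𝟙 E₀ := by rw [← Category.assoc]; exact hgi1
  have hleft : (gi' ≫ c') ≫ c = 𝟙 E₁ := by rw [Category.assoc]; exact hgi2'
  have hinv : (c' ≫ gi) ≫ c = 𝟙 E₁ := by
    have : ((gi' ≫ c') ≫ c) ≫ ((c' ≫ gi) ≫ c) = (c' ≫ gi) ≫ c := by
      rw [hleft, Category.id_comp]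
    calc (c' ≫ gi) ≫ c = ((gi' ≫ c') ≫ c) ≫ ((c' ≫ gi) ≫ c) := this.symm
      _ = (gi' ≫ c') ≫ (c ≫ (c' ≫ gi)) ≫ c := by simp only [Category.assoc]
      _ = (gi' ≫ c') ≫ c := by rw [hright, Category.id_comp]
      _ = 𝟙 E₁ := hleft
  exact ⟨⟨c, c' ≫ gi, hright, hinv⟩, hc2⟩

/-- Realizations can be transported along an isomorphism of the base. -/
lemma aux_realize_pull_iso {A X C C' : B} {δ : σ.Ext C A} {x : A ⟶ X} {y : X ⟶ C}
    (h : σ.realize δ x y) (c : C' ≅ C) :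
    σ.realize (σ.pull c.hom δ) x (y ≫ c.inv) := by
  obtain ⟨X₁, x₁, y₁, h₁⟩ := σ.realize_ex (σ.pull c.hom δ)
  obtain ⟨b, hb1, hb2⟩ := σ.realize_map (σ.pull c.hom δ) δ x₁ y₁ x y (𝟙 A) c.hom h₁ h
    (by rw [aux_push_id])
  obtain ⟨b', hb1', hb2'⟩ := σ.realize_map δ (σ.pull c.hom δ) x y x₁ y₁ (𝟙 A) c.inv h h₁
    (by rw [aux_push_id, ← aux_pull_comp, c.inv_hom_id, aux_pull_id])
  rw [Category.id_comp] at hb1 hb1'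
  -- e : X ⟶ X
  have hxe : x ≫ (b' ≫ b) = x := by rw [← Category.assoc, hb1', hb1]
  have hey : (b' ≫ b) ≫ y = y := by
    rw [Category.assoc, ← hb2, ← Category.assoc, ← hb2', Category.assoc,
      c.inv_hom_id, Category.comp_id]
  have hxe' : x₁ ≫ (b ≫ b') = x₁ := by rw [← Category.assoc, hb1, hb1']
  have hey' : (b ≫ b') ≫ y₁ = y₁ := by
    rw [Category.assoc, ← hb2', ← Category.assoc, ← hb2, Category.assoc,
      c.hom_inv_id, Category.comp_id]
  obtain ⟨ei, hei1, hei2⟩ := aux_iso_X σ h hxe hey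
  obtain ⟨ei', hei1', hei2'⟩ := aux_iso_X σ h₁ hxe' hey'
  have hbr : b ≫ (b' ≫ ei') = 𝟙 X₁ := by rw [← Category.assoc]; exact hei1'
  have hbl : (ei ≫ b') ≫ b = 𝟙 X := by rw [Category.assoc]; exact hei2
  have hreq : b' ≫ ei' = ei ≫ b' := by
    calc b' ≫ ei' = ((ei ≫ b') ≫ b) ≫ (b' ≫ ei') := by rw [hbl, Category.id_comp]
      _ = (ei ≫ b') ≫ (b ≫ (b' ≫ ei')) := by simp only [Category.assoc]
      _ = ei ≫ b' := by rw [hbr, Category.comp_id]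
  have hinv : (b' ≫ ei') ≫ b = 𝟙 X := by rw [hreq]; exact hbl
  have hres := σ.realize_iso (σ.pull c.hom δ) x₁ y₁ ⟨b, b' ≫ ei', hbr, hinv⟩ h₁
  -- hres : realize _ (x₁ ≫ b) ((b' ≫ ei') ≫ y₁)
  have h1 : x₁ ≫ b = x := hb1
  have h2 : (b' ≫ ei') ≫ y₁ = y ≫ c.inv := by
    rw [hreq, Category.assoc, ← hb2', ← Category.assoc]
    have : ei ≫ y = y := by
      conv_lhs => rw [← hey]
      rw [← Category.assoc, hei2, Category.id_comp]
    rw [this]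
  rw [h1, h2] at hres
  exact hres

/-- The shear conflation `A ↣ A ⊞ C ↠ C` with inflation `(𝟙, g)`. -/
lemma aux_shear_r {A C : B} (g : A ⟶ C) :
    σ.realize (0 : σ.Ext C A) (biprod.lift (𝟙 A) g)
      (biprod.snd - biprod.fst ≫ g : A ⊞ C ⟶ C) := by
  have hψ : (biprod.lift biprod.fst (biprod.fst ≫ g + biprod.snd) : A ⊞ C ⟶ A ⊞ C) ≫
      biprod.lift biprod.fst (biprod.snd - biprod.fst ≫ g) = 𝟙 (A ⊞ C) := by
    apply biprod.hom_ext <;> simp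
  have hψ' : (biprod.lift biprod.fst (biprod.snd - biprod.fst ≫ g) : A ⊞ C ⟶ A ⊞ C) ≫
      biprod.lift biprod.fst (biprod.fst ≫ g + biprod.snd) = 𝟙 (A ⊞ C) := by
    apply biprod.hom_ext <;> simp
  have h := σ.realize_iso (0 : σ.Ext C A) biprod.inl biprod.snd
    ⟨biprod.lift biprod.fst (biprod.fst ≫ g + biprod.snd),
     biprod.lift biprod.fst (biprod.snd - biprod.fst ≫ g), hψ, hψ'⟩
    (σ.realize_zero A C)
  have heq : (biprod.inl : A ⟶ A ⊞ C) ≫ biprod.lift biprod.fst (biprod.fst ≫ g + biprod.snd) =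
      biprod.lift (𝟙 A) g := by apply biprod.hom_ext <;> simp
  rw [heq] at h
  simpa using h

/-- The shear conflation `A ↣ C ⊞ A ↠ C` with inflation `(g, 𝟙)`. -/
lemma aux_shear_l {A C : B} (g : A ⟶ C) :
    σ.realize (0 : σ.Ext C A) (biprod.lift g (𝟙 A))
      (biprod.fst - biprod.snd ≫ g : C ⊞ A ⟶ C) := by
  have hψ : (biprod.lift (biprod.fst ≫ g + biprod.snd) biprod.fst : A ⊞ C ⟶ C ⊞ A) ≫
      biprod.lift biprod.snd (biprod.fst - biprod.snd ≫ g) = 𝟙 (A ⊞ C) := by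
    apply biprod.hom_ext <;> simp
  have hψ' : (biprod.lift biprod.snd (biprod.fst - biprod.snd ≫ g) : C ⊞ A ⟶ A ⊞ C) ≫
      biprod.lift (biprod.fst ≫ g + biprod.snd) biprod.fst = 𝟙 (C ⊞ A) := by
    apply biprod.hom_ext <;> simp
  have h := σ.realize_iso (0 : σ.Ext C A) biprod.inl biprod.snd
    (⟨biprod.lift (biprod.fst ≫ g + biprod.snd) biprod.fst,
      biprod.lift biprod.snd (biprod.fst - biprod.snd ≫ g), hψ, hψ'⟩ : A ⊞ C ≅ C ⊞ A)
    (σ.realize_zero A C)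
  have heq : (biprod.inl : A ⟶ A ⊞ C) ≫ biprod.lift (biprod.fst ≫ g + biprod.snd) biprod.fst =
      biprod.lift g (𝟙 A) := by apply biprod.hom_ext <;> simp
  rw [heq] at h
  simpa using h

/-- The trivial conflation `A ↣ A ↠ Z` onto a zero object. -/
lemma aux_id_conflation {A Z : B} (hZ : IsZero Z) :
    σ.realize (0 : σ.Ext Z A) (𝟙 A) (biprod.inl ≫ biprod.snd : A ⟶ Z) := by
  have hiso : (biprod.fst : A ⊞ Z ⟶ A) ≫ biprod.inl = 𝟙 (A ⊞ Z) := by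
    apply biprod.hom_ext
    · simp
    · exact hZ.eq_of_tgt _ _
  have h := σ.realize_iso (0 : σ.Ext Z A) biprod.inl biprod.snd
    (⟨biprod.fst, biprod.inl, hiso, by simp⟩ : A ⊞ Z ≅ A)
    (σ.realize_zero A Z)
  simpa using h

/-- `A ≅ A ⊞ Z` for a zero object `Z`. -/
noncomputable def aux_isoBiprodZR {A Z : B} (hZ : IsZero Z) : A ≅ A ⊞ Z where
  hom := biprod.inl
  inv := biprod.fst
  hom_inv_id := by simp
  inv_hom_id := by
    apply biprod.hom_ext
    · simp
    · exact hZ.eq_of_tgt _ _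

/-- `A ≅ Z ⊞ A` for a zero object `Z`. -/
noncomputable def aux_isoBiprodZL {A Z : B} (hZ : IsZero Z) : A ≅ Z ⊞ A where
  hom := biprod.inr
  inv := biprod.snd
  hom_inv_id := by simp
  inv_hom_id := by
    apply biprod.hom_ext
    · exact hZ.eq_of_tgt _ _
    · simp

end AuxProof

/-- Proposition 4.1 / `approxi`. Assume `B` has enough projectives and let
`U, V ⊆ B` be full additive subcategories closed under direct summands and isomorphisms, with
`P ⊆ U` and `U` extension-closed.  Then `(U,V)` is a cotorsion pair if and only if
`E(U,V) = 0` and `B = CoCone(V,U)`, i.e. every object admits a conflation `X ↣ V' ↠ U'`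
with `V' ∈ V`, `U' ∈ U`. -/
theorem statement_13 {B : Type u} [Category.{v} B] [Preadditive B] [HasFiniteBiproducts B]
    (σ : ExtStruct B) (hproj : σ.EnoughProj) (U V : Set B)
    (hU : AddClosed U) (hV : AddClosed V)
    (hPU : σ.projs ⊆ U)
    (hUext : ∀ ⦃A X C : B⦄ (f : A ⟶ X) (g : X ⟶ C), σ.Conflation f g →
      A ∈ U → C ∈ U → X ∈ U) :
    σ.IsCotorsionPair U V ↔
      ((∀ ⦃X : B⦄, X ∈ U → ∀ ⦃Y : B⦄, Y ∈ V → ∀ δ : σ.Ext X Y, δ = 0) ∧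
       ∀ X : B, ∃ (V₀ U₀ : B) (f : X ⟶ V₀) (g : V₀ ⟶ U₀),
         V₀ ∈ V ∧ U₀ ∈ U ∧ σ.Conflation f g) := by
  constructor
  · intro h
    exact ⟨h.ext_vanish, h.coresolve⟩
  rintro ⟨h1, h2⟩
  refine ⟨hU, hV, h1, ?_, h2⟩
  intro X
  obtain ⟨P, K, i, p, hP, δ, hδ⟩ := hproj X
  obtain ⟨V', U', j, q, hV', hU', ρ, hρ⟩ := h2 K
  obtain ⟨Z, hZ⟩ := CategoryTheory.Limits.HasZeroObject.zero (C := B)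
  -- Run 1 : compose K ↣ K ⊞ P and K ⊞ P ↣ V' ⊞ P to get E₀ with P ↣ E₀ ↠ U'
  have hsum1 : σ.realize (σ.sumExt ρ (0 : σ.Ext Z P)) (biprod.map j (𝟙 P))
      (biprod.map q (biprod.inl ≫ biprod.snd)) :=
    σ.realize_sum ρ 0 j q (𝟙 P) _ hρ (aux_id_conflation σ hZ)
  obtain ⟨E₀, d, e, h', δ'', _, _, hre1, hre2, _, _⟩ :=
    σ.et4 (0 : σ.Ext P K) (biprod.lift (𝟙 K) i) (biprod.snd - biprod.fst ≫ i)
      (σ.sumExt ρ (0 : σ.Ext Z P)) (biprod.map j (𝟙 P))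
      (biprod.map q (biprod.inl ≫ biprod.snd)) (aux_shear_r σ i) hsum1
  have hcomp1 : biprod.lift (𝟙 K) i ≫ biprod.map j (𝟙 P) = biprod.lift j i := by
    apply biprod.hom_ext <;> simp
  rw [hcomp1] at hre1
  -- fix the endpoint of P ↣ E₀ ↠ U' ⊞ Z
  have hre2' := aux_realize_pull_iso σ hre2 (aux_isoBiprodZR hZ (A := U'))
  have hE₀U : E₀ ∈ U := hUext d _ ⟨_, hre2'⟩ (hPU hP) hU'
  -- Run 2 : compose K ↣ V' ⊞ K and V' ⊞ K ↣ V' ⊞ P to get E₁ with V' ↣ E₁ ↠ X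
  have hsum2 : σ.realize (σ.sumExt (0 : σ.Ext Z V') δ) (biprod.map (𝟙 V') i)
      (biprod.map (biprod.inl ≫ biprod.snd) p) :=
    σ.realize_sum 0 δ (𝟙 V') _ i p (aux_id_conflation σ hZ) hδ
  obtain ⟨E₁, d₁, e₁, h₁', ε'', _, _, hre3, hre4, _, _⟩ :=
    σ.et4 (0 : σ.Ext V' K) (biprod.lift j (𝟙 K)) (biprod.fst - biprod.snd ≫ j)
      (σ.sumExt (0 : σ.Ext Z V') δ) (biprod.map (𝟙 V') i)
      (biprod.map (biprod.inl ≫ biprod.snd) p) (aux_shear_l σ j) hsum2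
  have hcomp2 : biprod.lift j (𝟙 K) ≫ biprod.map (𝟙 V') i = biprod.lift j i := by
    apply biprod.hom_ext <;> simp
  rw [hcomp2] at hre3
  -- fix the endpoint of V' ↣ E₁ ↠ Z ⊞ X
  have hre4' := aux_realize_pull_iso σ hre4 (aux_isoBiprodZL hZ (A := X))
  -- identify the two cones
  obtain ⟨c, _⟩ := aux_cone_unique σ hre3 hre1
  have hfinal := σ.realize_iso _ d₁ _ c hre4'
  exact ⟨V', E₀, d₁ ≫ c.hom, c.inv ≫ (e₁ ≫ (aux_isoBiprodZL hZ (A := X)).inv),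
    hV', hE₀U, _, hfinal⟩


end ExtriHearts
end
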